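/- Let z ∈ ℍ^{n+1} be a negative vector, u ∈ ℍ^{n+1} a null vector, and v ∈ ℍ^{n+1} a negative vector, with u, v, z pairwise non-proportional. Then the line-distance quantity d(u,v;z) = inf{ |⟨z,w⟩|²/(⟨z,z⟩⟨w,w⟩) : w = uλ + vμ, λ,μ ∈ ℍ, ⟨w,w⟩ < 0 } equals 2·Re(⟨u,z⟩⟨u,v⟩⁻¹⟨z,v⟩⟨z,z⟩⁻¹) − (|⟨u,z⟩|²·⟨v,v⟩)/(|⟨u,v⟩|²·⟨z,z⟩). -/

import Mathlib

open scoped Quaternion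

noncomputable section

/-- The quaternionic Hermitian form of signature (n,1) on ℍ^{n+1}:
`⟨z,w⟩ = w̄₁ z_{n+1} + Σ_{i=2}^n w̄ᵢ zᵢ + w̄_{n+1} z₁`. -/
noncomputable def herm {n : ℕ} (z w : Fin (n+1) → ℍ[ℝ]) : ℍ[ℝ] :=
  star (w 0) * z (Fin.last n)
    + ∑ i ∈ Finset.Ioo (0 : Fin (n+1)) (Fin.last n), star (w i) * z i
    + star (w (Fin.last n)) * z 0

/-- `w` is (right-)proportional to `z`: `w = zλ` for some `λ ∈ ℍ`. -/
def Prp {n : ℕ} (z w : Fin (n+1) → ℍ[ℝ]) : Prop :=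
  ∃ lam : ℍ[ℝ], w = fun i => z i * lam

/-- Right scalar multiplication on ℍ^{n+1}. -/
noncomputable def smulR {n : ℕ} (z : Fin (n+1) → ℍ[ℝ]) (lam : ℍ[ℝ]) :
    Fin (n+1) → ℍ[ℝ] := fun i => z i * lam

/-- The quaternionic triple product `⟨p₁,p₂,p₃⟩ = ⟨p₂,p₁⟩⟨p₃,p₂⟩⟨p₁,p₃⟩`. -/
noncomputable def tri {n : ℕ} (p₁ p₂ p₃ : Fin (n+1) → ℍ[ℝ]) : ℍ[ℝ] :=
  herm p₂ p₁ * herm p₃ p₂ * herm p₁ p₃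

/-- The quaternionic Cartan angular invariant
`𝔸(p₁,p₂,p₃) = arccos(Re(−⟨p₁,p₂,p₃⟩)/|⟨p₁,p₂,p₃⟩|)`. -/
noncomputable def cartan {n : ℕ} (p₁ p₂ p₃ : Fin (n+1) → ℍ[ℝ]) : ℝ :=
  Real.arccos ((-(tri p₁ p₂ p₃)).re / ‖tri p₁ p₂ p₃‖)

/-- The quaternionic cross-ratio `𝕏(p₁,p₂,p₃,p₄) = ⟨p₃,p₁⟩⟨p₃,p₂⟩⁻¹⟨p₄,p₂⟩⟨p₄,p₁⟩⁻¹`. -/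
noncomputable def crossX {n : ℕ} (p₁ p₂ p₃ p₄ : Fin (n+1) → ℍ[ℝ]) : ℍ[ℝ] :=
  herm p₃ p₁ * (herm p₃ p₂)⁻¹ * herm p₄ p₂ * (herm p₄ p₁)⁻¹

/-- The group Sp(n,1) of quaternionic matrices preserving the Hermitian form. -/
def SpGrp (n : ℕ) : Set (Matrix (Fin (n+1)) (Fin (n+1)) ℍ[ℝ]) :=
  {g | ∀ z w : Fin (n+1) → ℍ[ℝ], herm (g.mulVec z) (g.mulVec w) = herm z w}

/-- Similarity of quaternions: `b = μ a μ⁻¹` for some nonzero `μ`. -/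
def QSim (a b : ℍ[ℝ]) : Prop := ∃ mu : ℍ[ℝ], mu ≠ 0 ∧ b = mu * a * mu⁻¹

/-- `η(u,v,z) = ⟨u,z⟩⟨u,v⟩⁻¹⟨z,v⟩⟨z,z⟩⁻¹`. -/
noncomputable def etaq {n : ℕ} (u v z : Fin (n+1) → ℍ[ℝ]) : ℍ[ℝ] :=
  herm u z * (herm u v)⁻¹ * herm z v * (herm z z)⁻¹

/-- The line-distance quantity
`d(u,v;z) = inf { |⟨z,w⟩|²/(⟨z,z⟩⟨w,w⟩) : w = uλ + vμ, ⟨w,w⟩ < 0 }`;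
it equals `cosh²(ρ(L_{uv},z)/2)`. -/
noncomputable def lineDist {n : ℕ} (u v z : Fin (n+1) → ℍ[ℝ]) : ℝ :=
  sInf { x : ℝ | ∃ lam mu : ℍ[ℝ],
    (herm (fun i => u i * lam + v i * mu) (fun i => u i * lam + v i * mu)).re < 0 ∧
    x = ‖herm z (fun i => u i * lam + v i * mu)‖^2
        / ((herm z z).re *
           (herm (fun i => u i * lam + v i * mu) (fun i => u i * lam + v i * mu)).re) }

open Quaternion

lemma re_mul_comm (a b : ℍ[ℝ]) : (a*b).re = (b*a).re := by
  simp [Quaternion.re_mul]; ring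

lemma lemM (A P X : ℍ[ℝ]) :
    (A*X*(A*P)).re = 2*(A*P).re*(A*X).re - normSq A * (star X * P).re := by
  simp [Quaternion.re_mul, Quaternion.imI_mul, Quaternion.imJ_mul, Quaternion.imK_mul,
    Quaternion.normSq_def', Quaternion.re_star, Quaternion.imI_star, Quaternion.imJ_star,
    Quaternion.imK_star]
  ring

lemma herm_comb_right {n : ℕ} (z u v : Fin (n+1) → ℍ[ℝ]) (lam mu : ℍ[ℝ]) :
    herm z (fun i => u i * lam + v i * mu) = star lam * herm z u + star mu * herm z v := by
  simp only [herm, star_add, star_mul, add_mul, mul_add, Finset.sum_add_distrib,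
    Finset.mul_sum, mul_assoc]
  abel

lemma herm_comb_left {n : ℕ} (z u v : Fin (n+1) → ℍ[ℝ]) (lam mu : ℍ[ℝ]) :
    herm (fun i => u i * lam + v i * mu) z = herm u z * lam + herm v z * mu := by
  simp only [herm, mul_add, add_mul, Finset.sum_add_distrib, Finset.sum_mul, mul_assoc]
  abel

lemma star_herm {n : ℕ} (z w : Fin (n+1) → ℍ[ℝ]) : star (herm z w) = herm w z := by
  simp only [herm, star_add, star_mul, star_star, star_sum]
  abel


lemma re_sum {n : ℕ} (s : Finset (Fin (n+1))) (f : Fin (n+1) → ℍ[ℝ]) :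
    (∑ i ∈ s, f i).re = ∑ i ∈ s, (f i).re :=
  map_sum (QuaternionAlgebra.reₗ (R := ℝ) (-1) 0 (-1)) f s

lemma re_conj_real (t : ℍ[ℝ]) (r : ℝ) : (star t * (r:ℍ[ℝ]) * t).re = normSq t * r := by
  rw [show star t * (r:ℍ[ℝ]) = (r:ℍ[ℝ]) * star t from (Quaternion.coe_commutes r (star t)).symm,
    mul_assoc, Quaternion.star_mul_self, ← Quaternion.coe_mul, Quaternion.re_coe]
  ring

lemma herm_first_zero_re {n : ℕ} (x : Fin (n+1) → ℍ[ℝ]) (h0 : x 0 = 0) :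
    (herm x x).re = ∑ i ∈ Finset.Ioo (0 : Fin (n+1)) (Fin.last n), normSq (x i) := by
  simp only [herm, h0, star_zero, zero_mul, mul_zero, add_zero, zero_add]
  rw [re_sum]
  exact Finset.sum_congr rfl fun i _ => by rw [Quaternion.star_mul_self, Quaternion.re_coe]

lemma re_herm_nonneg_of_first_zero {n : ℕ} (x : Fin (n+1) → ℍ[ℝ]) (h0 : x 0 = 0) :
    0 ≤ (herm x x).re := by
  rw [herm_first_zero_re x h0]
  exact Finset.sum_nonneg fun i _ => Quaternion.normSq_nonneg

lemma first_ne_zero_of_neg {n : ℕ} (x : Fin (n+1) → ℍ[ℝ]) (hx : (herm x x).re < 0) :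
    x 0 ≠ 0 := fun h0 => absurd (re_herm_nonneg_of_first_zero x h0) (not_le.mpr hx)

lemma herm_self_coe {n : ℕ} (w : Fin (n+1) → ℍ[ℝ]) :
    herm w w = (((herm w w).re : ℝ) : ℍ[ℝ]) :=
  Quaternion.star_eq_self.mp (star_herm w w)

/-- A null nonzero vector is not orthogonal to a negative vector. -/
lemma herm_ne_zero_null_neg {n : ℕ} (u y : Fin (n+1) → ℍ[ℝ])
    (hu : u ≠ 0) (huu : herm u u = 0) (hy : (herm y y).re < 0) :
    herm y u ≠ 0 := by
  intro h
  have huy : herm u y = 0 := by rw [← star_herm, h, star_zero]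
  have hy0 : y 0 ≠ 0 := first_ne_zero_of_neg y hy
  by_cases hu0 : u 0 = 0
  · have hsum : (∑ i ∈ Finset.Ioo (0 : Fin (n+1)) (Fin.last n), normSq (u i) : ℝ) = 0 := by
      rw [← herm_first_zero_re u hu0, huu, Quaternion.re_zero]
    have hmid : ∀ i ∈ Finset.Ioo (0 : Fin (n+1)) (Fin.last n), u i = 0 := fun i hi =>
      Quaternion.normSq_eq_zero.mp ((Finset.sum_eq_zero_iff_of_nonneg
        (fun i _ => Quaternion.normSq_nonneg)).mp hsum i hi)
    have hlast : u (Fin.last n) = 0 := by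
      have hexp : herm y u = star (u (Fin.last n)) * y 0 := by
        simp only [herm, hu0, star_zero, zero_mul]
        rw [Finset.sum_eq_zero (fun i hi => by rw [hmid i hi, star_zero, zero_mul])]
        simp
      rw [hexp] at h
      have := (mul_eq_zero.mp h).resolve_right hy0
      simpa using congrArg star this
    apply hu
    funext i
    by_cases hi0 : i = 0
    · rw [hi0]; exact hu0
    by_cases hil : i = Fin.last n
    · rw [hil]; exact hlast
    · exact hmid i (Finset.mem_Ioo.mpr ⟨Fin.pos_of_ne_zero hi0, lt_of_le_of_ne (Fin.le_last i) hil⟩)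
  · have hx0 : (fun i => y i * 1 + u i * (-((u 0)⁻¹ * y 0))) 0 = 0 := by
      simp only [mul_one, mul_neg]
      rw [← mul_assoc, mul_inv_cancel₀ hu0, one_mul, add_neg_cancel]
    have hxx : herm (fun i => y i * 1 + u i * (-((u 0)⁻¹ * y 0)))
        (fun i => y i * 1 + u i * (-((u 0)⁻¹ * y 0))) = herm y y := by
      rw [herm_comb_right, herm_comb_left, herm_comb_left, huu, huy, h]
      simp
    have := re_herm_nonneg_of_first_zero (fun i => y i * 1 + u i * (-((u 0)⁻¹ * y 0))) hx0
    rw [hxx] at this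
    exact absurd this (not_le.mpr hy)

/-- Two negative vectors cannot be orthogonal. -/
lemma not_orth_neg_neg {n : ℕ} (y w : Fin (n+1) → ℍ[ℝ])
    (hy : (herm y y).re < 0) (hw : (herm w w).re < 0) (h : herm y w = 0) : False := by
  have hwy : herm w y = 0 := by rw [← star_herm, h, star_zero]
  have hw0 : w 0 ≠ 0 := first_ne_zero_of_neg w hw
  have hx0 : (fun i => y i * 1 + w i * (-((w 0)⁻¹ * y 0))) 0 = 0 := by
    simp only [mul_one, mul_neg]
    rw [← mul_assoc, mul_inv_cancel₀ hw0, one_mul, add_neg_cancel]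
  have hxx : herm (fun i => y i * 1 + w i * (-((w 0)⁻¹ * y 0)))
      (fun i => y i * 1 + w i * (-((w 0)⁻¹ * y 0)))
      = herm y y + star (-((w 0)⁻¹ * y 0)) * herm w w * (-((w 0)⁻¹ * y 0)) := by
    rw [herm_comb_right, herm_comb_left, herm_comb_left, h, hwy]
    simp [mul_assoc]
  have hre : (star (-((w 0)⁻¹ * y 0)) * herm w w * (-((w 0)⁻¹ * y 0))).re
      = normSq (-((w 0)⁻¹ * y 0)) * (herm w w).re := by
    rw [herm_self_coe w, re_conj_real, Quaternion.re_coe]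
  have hneg : (herm (fun i => y i * 1 + w i * (-((w 0)⁻¹ * y 0)))
      (fun i => y i * 1 + w i * (-((w 0)⁻¹ * y 0)))).re < 0 := by
    rw [hxx, Quaternion.re_add, hre]
    have : normSq (-((w 0)⁻¹ * y 0)) * (herm w w).re ≤ 0 :=
      mul_nonpos_of_nonneg_of_nonpos Quaternion.normSq_nonneg hw.le
    linarith
  exact absurd (re_herm_nonneg_of_first_zero (fun i => y i * 1 + w i * (-((w 0)⁻¹ * y 0))) hx0)
    (not_le.mpr hneg)

lemma normSq_mul' (a b : ℍ[ℝ]) : normSq (a*b) = normSq a * normSq b := map_mul normSq a b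

lemma re_smul' (r : ℝ) (a : ℍ[ℝ]) : (r • a).re = r * a.re := rfl

lemma key (α γ A : ℍ[ℝ]) (hα : normSq α ≠ 0) (hA : normSq A ≠ 0) (β : ℝ) (lam mu : ℍ[ℝ]) :
    normSq (star lam * α + star mu * γ)
      = (2*((A*(α*star γ)).re/normSq A) - (normSq α/normSq A)*β)
          * (2*(star mu * A * lam).re + normSq mu * β)
        + (normSq α/normSq A)
          * normSq (A*lam + ((β:ℍ[ℝ]) - (normSq α)⁻¹ • (γ * star α * star A))*mu) := by
  have h1 : normSq (star lam * α + star mu * γ)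
      = normSq lam * normSq α + normSq mu * normSq γ
        + 2*((star lam*α)*(star γ * mu)).re := by
    rw [Quaternion.normSq_add, normSq_mul', normSq_mul', Quaternion.normSq_star,
      Quaternion.normSq_star, star_mul, star_star]
  have hsC : star (γ * star α * star A) = A*(α*star γ) := by
    simp [star_mul, mul_assoc]
  have h2 : normSq (A*lam + ((β:ℍ[ℝ]) - (normSq α)⁻¹ • (γ * star α * star A))*mu)
      = normSq A * normSq lam
        + normSq ((β:ℍ[ℝ]) - (normSq α)⁻¹ • (γ * star α * star A)) * normSq mu
        + 2*((A*lam)*(star mu * star ((β:ℍ[ℝ]) - (normSq α)⁻¹ • (γ * star α * star A)))).re := by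
    rw [Quaternion.normSq_add, normSq_mul', normSq_mul', star_mul]
  have h3 : normSq ((β:ℍ[ℝ]) - (normSq α)⁻¹ • (γ * star α * star A))
      = β^2 + normSq γ * normSq A / normSq α
        - 2*β*(A*(α*star γ)).re/normSq α := by
    rw [sub_eq_add_neg, Quaternion.normSq_add, Quaternion.normSq_neg, Quaternion.normSq_coe,
      Quaternion.normSq_smul, normSq_mul', normSq_mul', Quaternion.normSq_star,
      Quaternion.normSq_star, star_neg, Quaternion.star_smul, hsC, mul_neg, Quaternion.re_neg, mul_smul_comm,
      re_smul', Quaternion.coe_mul_eq_smul, re_smul']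
    field_simp
    ring
  have h5 : (star mu * A * lam).re = (A*(lam*star mu)).re := by
    rw [re_mul_comm, show lam*(star mu*A) = (lam*star mu)*A from by simp [mul_assoc],
      re_mul_comm]
  have hre2 : (star (lam*star mu) * (α*star γ)).re = ((star lam*α)*(star γ*mu)).re := by
    rw [star_mul, star_star,
      show (mu*star lam)*(α*star γ) = mu*((star lam*α)*star γ) from by simp [mul_assoc],
      re_mul_comm,
      show ((star lam*α)*star γ)*mu = (star lam*α)*(star γ*mu) from by simp [mul_assoc]]
  have h4 : ((A*lam)*(star mu * star ((β:ℍ[ℝ]) - (normSq α)⁻¹ • (γ * star α * star A)))).re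
      = β*(A*(lam*star mu)).re
        - (normSq α)⁻¹*(2*(A*(α*star γ)).re*(A*(lam*star mu)).re
            - normSq A*((star lam*α)*(star γ*mu)).re) := by
    rw [star_sub, Quaternion.star_coe, Quaternion.star_smul, hsC]
    rw [mul_sub, mul_sub, Quaternion.re_sub, mul_smul_comm, mul_smul_comm, re_smul',
      Quaternion.mul_coe_eq_smul, mul_smul_comm, re_smul']
    rw [show (A*lam)*star mu = A*(lam*star mu) from by simp [mul_assoc],
      show (A*lam)*(star mu*(A*(α*star γ))) = A*(lam*star mu)*(A*(α*star γ)) from by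
        simp [mul_assoc], lemM, hre2]
  rw [h1, h2, h3, h4, h5]
  field_simp
  ring

lemma hww_re {n : ℕ} (u v : Fin (n+1) → ℍ[ℝ]) (huu : herm u u = 0) (lam mu : ℍ[ℝ]) :
    (herm (fun i => u i*lam + v i*mu) (fun i => u i*lam + v i*mu)).re
      = 2*(star mu * (herm u v) * lam).re + normSq mu * (herm v v).re := by
  rw [herm_comb_right, herm_comb_left, herm_comb_left, huu, ← star_herm u v]
  nth_rewrite 1 [herm_self_coe v]
  simp only [zero_mul, zero_add, mul_add, Quaternion.re_add]
  rw [show star lam * (star (herm u v) * mu) = star (star mu * (herm u v) * lam) from by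
      simp [star_mul, mul_assoc],
    Quaternion.re_star,
    show star mu * ((herm u v) * lam) = star mu * (herm u v) * lam from (mul_assoc _ _ _).symm,
    show star mu * ((((herm v v).re : ℝ) : ℍ[ℝ]) * mu)
      = star mu * (((herm v v).re : ℝ) : ℍ[ℝ]) * mu from (mul_assoc _ _ _).symm,
    re_conj_real]
  ring

lemma hCre (α γ A : ℍ[ℝ]) : (γ * star α * star A).re = (A*(α*star γ)).re := by
  rw [← Quaternion.re_star, show star (γ * star α * star A) = A*(α*star γ) from by
    simp [star_mul, mul_assoc]]

lemma inf_lemma (α γ A : ℍ[ℝ]) (β δ : ℝ) (hδ : δ < 0)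
    (hnα : normSq α ≠ 0) (hnA : normSq A ≠ 0)
    (hstrict : 2*(A*(α*star γ)).re/normSq α < β) :
    sInf {x : ℝ | ∃ lam mu : ℍ[ℝ], 2*(star mu*A*lam).re + normSq mu*β < 0 ∧
        x = normSq (star lam*α + star mu*γ)/(δ*(2*(star mu*A*lam).re + normSq mu*β))}
      = (2*((A*(α*star γ)).re/normSq A) - (normSq α/normSq A)*β)/δ := by
  set e : ℝ := (A*(α*star γ)).re with he
  set T : ℝ := (2*(e/normSq A) - (normSq α/normSq A)*β)/δ with hT
  set S := {x : ℝ | ∃ lam mu : ℍ[ℝ], 2*(star mu*A*lam).re + normSq mu*β < 0 ∧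
        x = normSq (star lam*α + star mu*γ)/(δ*(2*(star mu*A*lam).re + normSq mu*β))} with hS
  have hnαpos : 0 < normSq α := lt_of_le_of_ne Quaternion.normSq_nonneg (Ne.symm hnα)
  have hAne : A ≠ 0 := Quaternion.normSq_ne_zero.mp hnA
  have hδne : δ ≠ 0 := ne_of_lt hδ
  -- lower bound
  have hlb : ∀ x ∈ S, T ≤ x := by
    rintro x ⟨lam, mu, hD, hx⟩
    set Dr : ℝ := 2*(star mu*A*lam).re + normSq mu*β with hDr
    have hDrne : Dr ≠ 0 := ne_of_lt hD
    have hδD : 0 < δ * Dr := mul_pos_of_neg_of_neg hδ hD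
    have hxT : x = T + (normSq α/normSq A)
        * normSq (A*lam + ((β:ℍ[ℝ]) - (normSq α)⁻¹ • (γ * star α * star A))*mu) / (δ*Dr) := by
      rw [hx, key α γ A hnα hnA β lam mu, ← hDr, ← he, add_div,
        mul_div_mul_right _ _ hDrne, hT]
    have h0 : 0 ≤ (normSq α/normSq A)
        * normSq (A*lam + ((β:ℍ[ℝ]) - (normSq α)⁻¹ • (γ * star α * star A))*mu) / (δ*Dr) :=
      div_nonneg (mul_nonneg (div_nonneg Quaternion.normSq_nonneg Quaternion.normSq_nonneg)
        Quaternion.normSq_nonneg) hδD.le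
    linarith
  -- membership
  have hAl : A * -(A⁻¹ * ((β:ℍ[ℝ]) - (normSq α)⁻¹ • (γ * star α * star A)))
      = -((β:ℍ[ℝ]) - (normSq α)⁻¹ • (γ * star α * star A)) := by
    rw [mul_neg, ← mul_assoc, mul_inv_cancel₀ hAne, one_mul]
  have hkre : ((β:ℍ[ℝ]) - (normSq α)⁻¹ • (γ * star α * star A)).re
      = β - (normSq α)⁻¹ * e := by
    rw [Quaternion.re_sub, Quaternion.re_coe, re_smul', hCre, he]
  have hDneg : 2*(star (1:ℍ[ℝ])*A*(-(A⁻¹ * ((β:ℍ[ℝ]) - (normSq α)⁻¹ • (γ * star α * star A))))).re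
      + normSq (1:ℍ[ℝ])*β < 0 := by
    rw [star_one, one_mul, hAl, Quaternion.re_neg, hkre, map_one]
    have h2 : 2*((normSq α)⁻¹*e) = 2*e/normSq α := by ring
    have := hstrict
    nlinarith [hstrict, h2]
  have hmem : T ∈ S := by
    refine ⟨-(A⁻¹ * ((β:ℍ[ℝ]) - (normSq α)⁻¹ • (γ * star α * star A))), 1, hDneg, ?_⟩
    rw [key α γ A hnα hnA β _ 1, ← he,
      show A * -(A⁻¹ * ((β:ℍ[ℝ]) - (normSq α)⁻¹ • (γ * star α * star A)))
          + ((β:ℍ[ℝ]) - (normSq α)⁻¹ • (γ * star α * star A)) * 1 = 0 from by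
        rw [hAl, mul_one, neg_add_cancel],
      map_zero, mul_zero, add_zero, mul_div_mul_right _ _ (ne_of_lt hDneg), hT]
  exact le_antisymm (csInf_le ⟨T, fun x hx => hlb x hx⟩ hmem) (le_csInf ⟨T, hmem⟩ hlb)


/-- for negative `z`, null `u`, negative `v`, pairwise non-proportional,
`d(u,v;z) = 2 Re(⟨u,z⟩⟨u,v⟩⁻¹⟨z,v⟩⟨z,z⟩⁻¹) − |⟨u,z⟩|²⟨v,v⟩/(|⟨u,v⟩|²⟨z,z⟩)`. -/
theorem stmt10 {n : ℕ} (hn : 2 ≤ n) (u v z : Fin (n+1) → ℍ[ℝ])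
    (hu : u ≠ 0) (huu : herm u u = 0)
    (hv : (herm v v).re < 0) (hz : (herm z z).re < 0)
    (huv : ¬ Prp u v) (huz : ¬ Prp u z) (hvz : ¬ Prp v z) :
    lineDist u v z
      = 2 * (etaq u v z).re
        - ‖herm u z‖^2 * (herm v v).re / (‖herm u v‖^2 * (herm z z).re) := by
  have hαne : herm z u ≠ 0 := herm_ne_zero_null_neg u z hu huu hz
  have hvune : herm v u ≠ 0 := herm_ne_zero_null_neg u v hu huu hv
  have hAne : herm u v ≠ 0 := by rw [← star_herm v u]; exact star_ne_zero.mpr hvune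
  have hnα : normSq (herm z u) ≠ 0 := Quaternion.normSq_ne_zero.mpr hαne
  have hnA : normSq (herm u v) ≠ 0 := Quaternion.normSq_ne_zero.mpr hAne
  have hnαpos : 0 < normSq (herm z u) :=
    lt_of_le_of_ne Quaternion.normSq_nonneg (Ne.symm hnα)
  have hδne : (herm z z).re ≠ 0 := ne_of_lt hz
  have hns : ∀ q : ℍ[ℝ], ‖q‖^2 = normSq q := fun q => by
    rw [sq, ← Quaternion.normSq_eq_norm_mul_self]
  -- strict inequality from the signature of the form
  have hstrict : 2*((herm u v)*((herm z u)*star (herm z v))).re/normSq (herm z u)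
      < (herm v v).re := by
    set lam₀ : ℍ[ℝ] := -star ((herm z v) * (herm z u)⁻¹) with hlam₀
    have hzw₀ : herm z (fun i => u i * lam₀ + v i * (1:ℍ[ℝ])) = 0 := by
      rw [herm_comb_right, hlam₀, star_neg, star_star, star_one, one_mul, neg_mul,
        mul_assoc, inv_mul_cancel₀ hαne, mul_one, neg_add_cancel]
    have hw₀ne : (fun i => u i * lam₀ + v i * (1:ℍ[ℝ])) ≠ 0 := by
      intro h0
      apply huv
      refine ⟨-lam₀, funext fun i => ?_⟩
      have h1 := congrFun h0 i
      simp only [Pi.zero_apply, mul_one] at h1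
      rw [mul_neg]
      exact eq_neg_of_add_eq_zero_right h1
    have hw₀re := hww_re u v huu lam₀ 1
    have hpos : 0 < (herm (fun i => u i * lam₀ + v i * (1:ℍ[ℝ]))
        (fun i => u i * lam₀ + v i * (1:ℍ[ℝ]))).re := by
      rcases lt_trichotomy (herm (fun i => u i * lam₀ + v i * (1:ℍ[ℝ]))
        (fun i => u i * lam₀ + v i * (1:ℍ[ℝ]))).re 0 with hlt | heq | hgt
      · exact (not_orth_neg_neg z _ hz hlt hzw₀).elim
      · have hnull : herm (fun i => u i * lam₀ + v i * (1:ℍ[ℝ]))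
            (fun i => u i * lam₀ + v i * (1:ℍ[ℝ])) = 0 := by
          rw [herm_self_coe _, heq]; simp
        exact (herm_ne_zero_null_neg _ z hw₀ne hnull hz hzw₀).elim
      · exact hgt
    rw [hw₀re] at hpos
    have hAl : (star (1:ℍ[ℝ]) * herm u v * lam₀).re
        = -((normSq (herm z u))⁻¹ * ((herm u v)*((herm z u)*star (herm z v))).re) := by
      rw [star_one, one_mul, hlam₀, mul_neg, Quaternion.re_neg, star_mul,
        Quaternion.inv_def, Quaternion.star_smul, star_star, smul_mul_assoc,
        mul_smul_comm, re_smul']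
    rw [hAl, map_one, one_mul] at hpos
    have h2 : 2*((normSq (herm z u))⁻¹ * ((herm u v)*((herm z u)*star (herm z v))).re)
        = 2*((herm u v)*((herm z u)*star (herm z v))).re/normSq (herm z u) := by ring
    linarith
  -- the re of etaq
  have hetaq : (etaq u v z).re = (herm z z).re⁻¹
      * ((normSq (herm u v))⁻¹ * ((herm u v)*((herm z u)*star (herm z v))).re) := by
    simp only [etaq]
    rw [← star_herm z u]
    rw [herm_self_coe z]
    simp only [Quaternion.re_coe]
    rw [← Quaternion.coe_inv, Quaternion.mul_coe_eq_smul, re_smul',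
      Quaternion.inv_def, mul_smul_comm, smul_mul_assoc, re_smul',
      show star (herm z u) * star (herm u v) * (herm z v)
          = star (star (herm z v) * ((herm u v)*(herm z u))) from by
        simp [star_mul, mul_assoc],
      Quaternion.re_star, re_mul_comm, mul_assoc]
  -- rewrite the right-hand side
  have hRHS : 2 * (etaq u v z).re
        - ‖herm u z‖^2 * (herm v v).re / (‖herm u v‖^2 * (herm z z).re)
      = (2*(((herm u v)*((herm z u)*star (herm z v))).re/normSq (herm u v))
          - (normSq (herm z u)/normSq (herm u v))*(herm v v).re)/(herm z z).re := by
    rw [hetaq, ← star_herm z u, hns, hns, Quaternion.normSq_star]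
    field_simp
  rw [hRHS]
  -- rewrite the set and apply the infimum lemma
  show sInf _ = _
  have hsets : { x : ℝ | ∃ lam mu : ℍ[ℝ],
      (herm (fun i => u i * lam + v i * mu) (fun i => u i * lam + v i * mu)).re < 0 ∧
      x = ‖herm z (fun i => u i * lam + v i * mu)‖^2
          / ((herm z z).re *
             (herm (fun i => u i * lam + v i * mu) (fun i => u i * lam + v i * mu)).re) }
      = {x : ℝ | ∃ lam mu : ℍ[ℝ],
          2*(star mu*(herm u v)*lam).re + normSq mu*(herm v v).re < 0 ∧
          x = normSq (star lam*(herm z u) + star mu*(herm z v))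
            /((herm z z).re*(2*(star mu*(herm u v)*lam).re + normSq mu*(herm v v).re))} := by
    ext x
    simp only [Set.mem_setOf_eq]
    simp_rw [hww_re u v huu, herm_comb_right, hns]
  show lineDist u v z = _
  unfold lineDist
  rw [hsets]
  exact inf_lemma (herm z u) (herm z v) (herm u v) (herm v v).re (herm z z).re hz hnα hnA hstrict
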